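/- Let C be an abelian category and 𝒲 a class of objects of C. Suppose 0→X→f Y→f' Z→0 and 0→K→g L→g' Y→0 are short exact sequences in C, each of which is both Hom(𝒲,−)-exact and Hom(−,𝒲)-exact. Then there exist an object N of C and morphisms d: K→N, e: N→X, h: N→L, h': L→Z satisfying h∘d = g, g'∘h = f∘e and h' = f'∘g', such that 0→K→d N→e X→0 and 0→N→h L→h' Z→0 are short exact sequences, and all four short exact sequences (the two given ones and the two new ones) are both Hom(𝒲,−)-exact and Hom(−,𝒲)-exact. -/
import Mathlib


open CategoryTheory Category Limits

universe v u

variable {C : Type u} [Category.{v} C] [Abelian C]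

def SES {A B X : C} (f : A ⟶ B) (g : B ⟶ X) : Prop :=
  ∃ w : f ≫ g = 0, (CategoryTheory.ShortComplex.mk f g w).ShortExact

def CovExact (𝒲 : Set C) {A B X : C} (f : A ⟶ B) (g : B ⟶ X) : Prop :=
  ∀ W ∈ 𝒲,
    (Function.Injective fun u : W ⟶ A => u ≫ f) ∧
    (∀ v : W ⟶ B, v ≫ g = 0 → ∃ u : W ⟶ A, u ≫ f = v) ∧
    (Function.Surjective fun v : W ⟶ B => v ≫ g)

def ContraExact (𝒲 : Set C) {A B X : C} (f : A ⟶ B) (g : B ⟶ X) : Prop :=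
  ∀ W ∈ 𝒲,
    (Function.Injective fun u : X ⟶ W => g ≫ u) ∧
    (∀ v : B ⟶ W, f ≫ v = 0 → ∃ u : X ⟶ W, g ≫ u = v) ∧
    (Function.Surjective fun v : B ⟶ W => f ≫ v)

lemma covExact_of_surj (𝒲 : Set C) {A B X : C} {f : A ⟶ B} {g : B ⟶ X} (hs : SES f g)
    (hsurj : ∀ W ∈ 𝒲, Function.Surjective fun v : W ⟶ B => v ≫ g) :
    CovExact 𝒲 f g := by
  obtain ⟨w, hse⟩ := hs
  haveI : Mono f := hse.mono_f
  refine fun W hW => ⟨fun u u' huu' => by rwa [cancel_mono] at huu', fun v hv => ?_, hsurj W hW⟩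
  exact hse.exact.lift' v hv

lemma contraExact_of_surj (𝒲 : Set C) {A B X : C} {f : A ⟶ B} {g : B ⟶ X} (hs : SES f g)
    (hsurj : ∀ W ∈ 𝒲, Function.Surjective fun v : B ⟶ W => f ≫ v) :
    ContraExact 𝒲 f g := by
  obtain ⟨w, hse⟩ := hs
  haveI : Epi g := hse.epi_g
  refine fun W hW => ⟨fun u u' huu' => by rwa [cancel_epi] at huu', fun v hv => ?_, hsurj W hW⟩
  exact hse.exact.desc' v hv

/-- Given both-exact short exact sequences `0→X→Y→Z→0` and `0→K→L→Y→0`,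
there are `N` and morphisms `d, e, h, h'` forming both-exact short exact sequences
`0→K→N→X→0` and `0→N→L→Z→0` compatible with the given data. -/
theorem stmt_4 (𝒲 : Set C) {X Y Z K L : C}
    (f : X ⟶ Y) (f' : Y ⟶ Z) (g : K ⟶ L) (g' : L ⟶ Y)
    (h1 : SES f f') (h2 : SES g g')
    (h1cov : CovExact 𝒲 f f') (h1con : ContraExact 𝒲 f f')
    (h2cov : CovExact 𝒲 g g') (h2con : ContraExact 𝒲 g g') :
    ∃ (N : C) (d : K ⟶ N) (e : N ⟶ X) (h : N ⟶ L) (h' : L ⟶ Z),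
      d ≫ h = g ∧ h ≫ g' = e ≫ f ∧ h' = g' ≫ f' ∧
      SES d e ∧ SES h h' ∧
      CovExact 𝒲 d e ∧ ContraExact 𝒲 d e ∧
      CovExact 𝒲 h h' ∧ ContraExact 𝒲 h h' := by
  obtain ⟨w1, hse1⟩ := h1
  obtain ⟨w2, hse2⟩ := h2
  haveI : Mono f := hse1.mono_f
  haveI : Epi f' := hse1.epi_g
  haveI : Mono g := hse2.mono_f
  haveI : Epi g' := hse2.epi_g
  have wd : (0 : K ⟶ X) ≫ f = g ≫ g' := by rw [zero_comp, w2]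
  set e : pullback f g' ⟶ X := pullback.fst f g' with he
  set h : pullback f g' ⟶ L := pullback.snd f g' with hh
  set d : K ⟶ pullback f g' := pullback.lift 0 g wd with hd
  have hdh : d ≫ h = g := pullback.lift_snd _ _ _
  have hde : d ≫ e = 0 := pullback.lift_fst _ _ _
  have hcond : e ≫ f = h ≫ g' := pullback.condition
  haveI : Mono d := mono_of_mono_fac hdh
  haveI : Epi e := Abelian.epi_pullback_of_epi_g f g'
  haveI : Mono h := pullback.snd_of_mono
  have wh : h ≫ g' ≫ f' = 0 := by
    rw [← Category.assoc, ← hcond, Category.assoc, w1, comp_zero]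
  -- 0 → K → N → X → 0 is short exact
  have sd : SES d e := by
    refine ⟨hde, ShortComplex.ShortExact.mk' ?_ inferInstance inferInstance⟩
    refine ShortComplex.exact_of_f_is_kernel _ (KernelFork.IsLimit.ofι' d hde ?_)
    intro A k hk
    have hk' : (k ≫ h) ≫ g' = 0 := by
      rw [Category.assoc, ← hcond, ← Category.assoc, hk, zero_comp]
    refine ⟨hse2.exact.lift (k ≫ h) hk', ?_⟩
    apply pullback.hom_ext
    · rw [Category.assoc]
      show _ ≫ d ≫ e = k ≫ e
      rw [hde, comp_zero, hk]
    · rw [Category.assoc]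
      show _ ≫ d ≫ h = k ≫ h
      rw [hdh]
      exact hse2.exact.lift_f (k ≫ h) hk'
  -- 0 → N → L → Z → 0 is short exact
  have sh : SES h (g' ≫ f') := by
    refine ⟨wh, ShortComplex.ShortExact.mk' ?_ inferInstance inferInstance⟩
    refine ShortComplex.exact_of_f_is_kernel _ (KernelFork.IsLimit.ofι' h wh ?_)
    intro A k hk
    have hk' : (k ≫ g') ≫ f' = 0 := by rw [Category.assoc]; exact hk
    refine ⟨pullback.lift (hse1.exact.lift (k ≫ g') hk') k ?_, pullback.lift_snd _ _ _⟩
    exact hse1.exact.lift_f (k ≫ g') hk'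
  obtain ⟨wdd, hsed⟩ := sd
  haveI : Epi e := hsed.epi_g
  refine ⟨pullback f g', d, e, h, g' ≫ f', hdh, hcond.symm, rfl, ⟨wdd, hsed⟩, sh,
    ?_, ?_, ?_, ?_⟩
  · -- CovExact d e
    refine covExact_of_surj 𝒲 ⟨wdd, hsed⟩ (fun W hW x => ?_)
    obtain ⟨t, ht⟩ := (h2cov W hW).2.2 (x ≫ f)
    exact ⟨pullback.lift x t ht.symm, pullback.lift_fst _ _ _⟩
  · -- ContraExact d e
    refine contraExact_of_surj 𝒲 ⟨wdd, hsed⟩ (fun W hW u => ?_)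
    obtain ⟨t, ht⟩ := (h2con W hW).2.2 u
    exact ⟨h ≫ t, by show d ≫ h ≫ t = u; rw [← Category.assoc, hdh]; exact ht⟩
  · -- CovExact h h'
    refine covExact_of_surj 𝒲 sh (fun W hW z => ?_)
    obtain ⟨y, hy⟩ := (h1cov W hW).2.2 z
    obtain ⟨l, hl0⟩ := (h2cov W hW).2.2 y
    have hl : l ≫ g' = y := hl0
    exact ⟨l, by show l ≫ g' ≫ f' = z; rw [← Category.assoc, hl]; exact hy⟩
  · -- ContraExact h h'
    refine contraExact_of_surj 𝒲 sh (fun W hW u => ?_)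
    obtain ⟨t, ht0⟩ := (h2con W hW).2.2 (d ≫ u)
    have ht : g ≫ t = d ≫ u := ht0
    have h0 : d ≫ (u - h ≫ t) = 0 := by
      rw [Preadditive.comp_sub, ← Category.assoc, hdh, ht, sub_self]
    obtain ⟨x, hx⟩ := hsed.exact.desc' (u - h ≫ t) h0
    obtain ⟨y, hy0⟩ := (h1con W hW).2.2 x
    have hy : f ≫ y = x := hy0
    refine ⟨t + g' ≫ y, ?_⟩
    show h ≫ (t + g' ≫ y) = u
    have : h ≫ g' ≫ y = e ≫ x := by
      rw [← Category.assoc, ← hcond, Category.assoc, hy]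
    rw [Preadditive.comp_add, this, hx]
    abel
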